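/- arXiv:1401.2037 — 3 statements merged into one kernel-verified Lean document; each statement's English description precedes it below -/
import Mathlib

section
/- Let (L,R) and (L',R') be adjunctions fitting into a square R'F = GR, let ζ : L'G → FL be the canonical transformation, and assume R'ζR is a natural isomorphism and G is conservative. If η'R'FA is an isomorphism for an object A, then ηRA is an isomorphism. Consequently if the adjunction (L',R') is idempotent, then (L,R) is idempotent. -/
open CategoryTheory

/-- Let `(L,R)` and `(L',R')` be adjunctions fitting into a square
`R'F = GR`, let `ζ : L'G ⟶ FL` be the canonical transformation (characterised by
`R'ζ ∘ η'G = Gη`), assume `R'ζR` is a (componentwise) isomorphism and `G` is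
conservative.  Then: (1) if `η'R'FA` is an isomorphism for an object `A`, so is `ηRA`;
(2) if the adjunction `(L',R')` is idempotent (i.e. `η'R'` is an isomorphism), then
`(L,R)` is idempotent (i.e. `ηR` is an isomorphism). -/
theorem idempotent_of_commutation_square
    {A B A' B' : Type*} [Category A] [Category B] [Category A'] [Category B']
    {L : B ⥤ A} {R : A ⥤ B} {L' : B' ⥤ A'} {R' : A' ⥤ B'}
    (adj : L ⊣ R) (adj' : L' ⊣ R')
    (F : A ⥤ A') (G : B ⥤ B') (e : F ⋙ R' = R ⋙ G)
    (ζ : G ⋙ L' ⟶ L ⋙ F)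
    (hζ : ∀ b : B, adj'.unit.app (G.obj b) ≫ R'.map (ζ.app b) ≫
        eqToHom (Functor.congr_obj e (L.obj b)) = G.map (adj.unit.app b))
    (hζR : ∀ a : A, IsIso (R'.map (ζ.app (R.obj a))))
    [G.ReflectsIsomorphisms] :
    (∀ a : A, IsIso (adj'.unit.app (R'.obj (F.obj a))) → IsIso (adj.unit.app (R.obj a))) ∧
    ((∀ a' : A', IsIso (adj'.unit.app (R'.obj a'))) →
      ∀ a : A, IsIso (adj.unit.app (R.obj a))) := by
  have main : ∀ a : A, IsIso (adj'.unit.app (R'.obj (F.obj a))) →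
      IsIso (adj.unit.app (R.obj a)) := by
    intro a h
    have he : R'.obj (F.obj a) = G.obj (R.obj a) := Functor.congr_obj e a
    rw [he] at h
    have := hζR a
    have hG : IsIso (G.map (adj.unit.app (R.obj a))) := by
      rw [← hζ (R.obj a)]
      infer_instance
    exact isIso_of_reflects_iso _ G
  exact ⟨main, fun h a => main a (h (F.obj a))⟩
end

section
/- Let M be a monoidal category whose tensor functors preserve coequalizers of reflexive pairs. Given two coequalizers p₁ : Y₁ → Z₁ of a reflexive pair (f₁,g₁) : X₁ ⇉ Y₁ and p₂ : Y₂ → Z₂ of a reflexive pair (f₂,g₂) : X₂ ⇉ Y₂, the morphism p₁⊗p₂ : Y₁⊗Y₂ → Z₁⊗Z₂ is a coequalizer of the pair (f₁⊗f₂, g₁⊗g₂). -/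
open CategoryTheory CategoryTheory.Limits MonoidalCategory

/-- A colimit cofork's π is an epimorphism. -/
lemma cofork_epi_pi {C : Type*} [Category C] {X Y Q : C} {f g : X ⟶ Y}
    (p : Y ⟶ Q) (w : f ≫ p = g ≫ p) (h : IsColimit (Cofork.ofπ p w)) : Epi p :=
  ⟨fun u v huv => Cofork.IsColimit.hom_ext h huv⟩

/-- Let `M` be a monoidal category whose tensor functors preserve
coequalizers of reflexive pairs.  Given coequalizers `p₁ : Y₁ ⟶ Z₁` of a reflexive
pair `(f₁,g₁)` and `p₂ : Y₂ ⟶ Z₂` of a reflexive pair `(f₂,g₂)`, the morphism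
`p₁ ⊗ p₂ : Y₁ ⊗ Y₂ ⟶ Z₁ ⊗ Z₂` is a coequalizer of `(f₁ ⊗ f₂, g₁ ⊗ g₂)`. -/
theorem tensor_of_reflexive_coequalizers
    (C : Type*) [Category C] [MonoidalCategory C]
    (htensor : ∀ (Z : C) {X Y : C} (f g : X ⟶ Y), IsReflexivePair f g →
      Nonempty (PreservesColimit (parallelPair f g) (tensorLeft Z)) ∧
      Nonempty (PreservesColimit (parallelPair f g) (tensorRight Z)))
    {X₁ Y₁ Z₁ X₂ Y₂ Z₂ : C}
    (f₁ g₁ : X₁ ⟶ Y₁) (hr₁ : IsReflexivePair f₁ g₁)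
    (f₂ g₂ : X₂ ⟶ Y₂) (hr₂ : IsReflexivePair f₂ g₂)
    (p₁ : Y₁ ⟶ Z₁) (w₁ : f₁ ≫ p₁ = g₁ ≫ p₁)
    (p₂ : Y₂ ⟶ Z₂) (w₂ : f₂ ≫ p₂ = g₂ ≫ p₂)
    (h₁ : Nonempty (IsColimit (Cofork.ofπ p₁ w₁)))
    (h₂ : Nonempty (IsColimit (Cofork.ofπ p₂ w₂))) :
    Nonempty (IsColimit (Cofork.ofπ (p₁ ⊗ₘ p₂)
      (show (f₁ ⊗ₘ f₂) ≫ (p₁ ⊗ₘ p₂) = (g₁ ⊗ₘ g₂) ≫ (p₁ ⊗ₘ p₂) by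
        rw [tensorHom_comp_tensorHom, tensorHom_comp_tensorHom, w₁, w₂]))) := by
  obtain ⟨s₁, hs₁f, hs₁g⟩ := hr₁.common_section'
  obtain ⟨s₂, hs₂f, hs₂g⟩ := hr₂.common_section'
  -- `p₁ ▷ Y₂` is a coequalizer of `(f₁ ▷ Y₂, g₁ ▷ Y₂)`
  have i₁ : PreservesColimit (parallelPair f₁ g₁) (tensorRight Y₂) :=
    ((htensor Y₂ f₁ g₁ hr₁).2).some
  have L₁ := isColimitCoforkMapOfIsColimit (tensorRight Y₂) w₁ h₁.some
  -- `Z₁ ◁ p₂` is a coequalizer of `(Z₁ ◁ f₂, Z₁ ◁ g₂)`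
  have i₂ : PreservesColimit (parallelPair f₂ g₂) (tensorLeft Z₁) :=
    ((htensor Z₁ f₂ g₂ hr₂).1).some
  have L₂ := isColimitCoforkMapOfIsColimit (tensorLeft Z₁) w₂ h₂.some
  -- `p₁ ▷ X₂` is an epi
  have i₃ : PreservesColimit (parallelPair f₁ g₁) (tensorRight X₂) :=
    ((htensor X₂ f₁ g₁ hr₁).2).some
  have L₃ := isColimitCoforkMapOfIsColimit (tensorRight X₂) w₁ h₁.some
  have epi₃ : Epi (p₁ ▷ X₂) := cofork_epi_pi _ _ L₃
  have epi₁ : Epi (p₁ ▷ Y₂) := cofork_epi_pi _ _ L₁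
  have epi₂ : Epi (Z₁ ◁ p₂) := cofork_epi_pi _ _ L₂
  have desc : ∀ s : Cofork (f₁ ⊗ₘ f₂) (g₁ ⊗ₘ g₂),
      {d : Z₁ ⊗ Z₂ ⟶ s.pt // (p₁ ⊗ₘ p₂) ≫ d = s.π} := by
    intro s
    have hA : (f₁ ▷ Y₂) ≫ s.π = (g₁ ▷ Y₂) ≫ s.π := by
      have e1 : f₁ ▷ Y₂ = (X₁ ◁ s₂) ≫ (f₁ ⊗ₘ f₂) := by
        rw [← id_tensorHom, tensorHom_comp_tensorHom, Category.id_comp, hs₂f, tensorHom_id]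
      have e2 : g₁ ▷ Y₂ = (X₁ ◁ s₂) ≫ (g₁ ⊗ₘ g₂) := by
        rw [← id_tensorHom, tensorHom_comp_tensorHom, Category.id_comp, hs₂g, tensorHom_id]
      rw [e1, e2, Category.assoc, Category.assoc, s.condition]
    have hB : ∀ (k : Z₁ ⊗ Y₂ ⟶ s.pt), (p₁ ▷ Y₂) ≫ k = s.π →
        (Z₁ ◁ f₂) ≫ k = (Z₁ ◁ g₂) ≫ k := by
      intro k hk
      have hC : (Y₁ ◁ f₂) ≫ s.π = (Y₁ ◁ g₂) ≫ s.π := by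
        have e1 : Y₁ ◁ f₂ = (s₁ ▷ X₂) ≫ (f₁ ⊗ₘ f₂) := by
          rw [← tensorHom_id, tensorHom_comp_tensorHom, Category.id_comp, hs₁f, id_tensorHom]
        have e2 : Y₁ ◁ g₂ = (s₁ ▷ X₂) ≫ (g₁ ⊗ₘ g₂) := by
          rw [← tensorHom_id, tensorHom_comp_tensorHom, Category.id_comp, hs₁g, id_tensorHom]
        rw [e1, e2, Category.assoc, Category.assoc, s.condition]
      rw [← cancel_epi (p₁ ▷ X₂)]
      rw [← whisker_exchange_assoc, ← whisker_exchange_assoc, hk, hC]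
    obtain ⟨k, hk⟩ : {k : Z₁ ⊗ Y₂ ⟶ s.pt // (p₁ ▷ Y₂) ≫ k = s.π} :=
      ⟨Cofork.IsColimit.desc L₁ s.π hA, Cofork.IsColimit.π_desc L₁⟩
    obtain ⟨d, hd⟩ : {d : Z₁ ⊗ Z₂ ⟶ s.pt // (Z₁ ◁ p₂) ≫ d = k} :=
      ⟨Cofork.IsColimit.desc L₂ k (hB k hk), Cofork.IsColimit.π_desc L₂⟩
    exact ⟨d, by rw [tensorHom_def p₁ p₂, Category.assoc, hd, hk]⟩
  refine ⟨Cofork.IsColimit.mk _ (fun s => (desc s).1) (fun s => (desc s).2)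
    (fun s m hm => ?_)⟩
  have : Epi (p₁ ⊗ₘ p₂) := by
    rw [MonoidalCategory.tensorHom_def]; exact epi_comp _ _
  rw [← cancel_epi (p₁ ⊗ₘ p₂), (desc s).2]
  exact hm
end

section
/- Let H be a quasi-bialgebra (H,m,u,Δ,ε,φ,λ,ρ) over a field k and F : H-Mod → Vect_k the forgetful functor from the monoidal category of left H-modules. Then the following are equivalent: (1) there exists a natural transformation ψ₂ making (F, id_k, ψ₂) a monoidal functor; (2) there exists an invertible element α ∈ H⊗H such that the twisted quasi-bialgebra H_α is an ordinary bialgebra; (3) there exists an invertible α ∈ H⊗H with φ = (H⊗Δ)(α⁻¹)·(1⊗α⁻¹)·(α⊗1)·(Δ⊗H)(α), (ε⊗H)(α) = λ and (H⊗ε)(α) = ρ. -/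
open TensorProduct

universe u

variable (k H : Type u) [Field k] [Ring H] [Algebra k H]

namespace QB

/-- `id ⊗ Δ` as an algebra map. -/
noncomputable def idΔ (Δ : H →ₐ[k] H ⊗[k] H) :
    H ⊗[k] H →ₐ[k] H ⊗[k] (H ⊗[k] H) :=
  Algebra.TensorProduct.map (AlgHom.id k H) Δ

/-- `Δ ⊗ id` as an algebra map, reassociated to land in `H ⊗ (H ⊗ H)`. -/
noncomputable def Δid (Δ : H →ₐ[k] H ⊗[k] H) :
    H ⊗[k] H →ₐ[k] H ⊗[k] (H ⊗[k] H) :=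
  (Algebra.TensorProduct.assoc k k k H H H).toAlgHom.comp
    (Algebra.TensorProduct.map Δ (AlgHom.id k H))

/-- `ε ⊗ id : H ⊗ H →ₐ H`. -/
noncomputable def epsL (ε : H →ₐ[k] k) : H ⊗[k] H →ₐ[k] H :=
  (Algebra.TensorProduct.lid k H).toAlgHom.comp
    (Algebra.TensorProduct.map ε (AlgHom.id k H))

/-- `id ⊗ ε : H ⊗ H →ₐ H`. -/
noncomputable def epsR (ε : H →ₐ[k] k) : H ⊗[k] H →ₐ[k] H :=
  (Algebra.TensorProduct.rid k k H).toAlgHom.comp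
    (Algebra.TensorProduct.map (AlgHom.id k H) ε)

/-- `id ⊗ id ⊗ Δ` on triple tensors. -/
noncomputable def m₁ (Δ : H →ₐ[k] H ⊗[k] H) :
    H ⊗[k] (H ⊗[k] H) →ₐ[k] H ⊗[k] (H ⊗[k] (H ⊗[k] H)) :=
  Algebra.TensorProduct.map (AlgHom.id k H)
    (Algebra.TensorProduct.map (AlgHom.id k H) Δ)

/-- `Δ ⊗ id ⊗ id` on triple tensors (reassociated). -/
noncomputable def m₂ (Δ : H →ₐ[k] H ⊗[k] H) :
    H ⊗[k] (H ⊗[k] H) →ₐ[k] H ⊗[k] (H ⊗[k] (H ⊗[k] H)) :=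
  (Algebra.TensorProduct.assoc k k k H H (H ⊗[k] H)).toAlgHom.comp
    (Algebra.TensorProduct.map Δ (AlgHom.id k (H ⊗[k] H)))

/-- `id ⊗ Δ ⊗ id` on triple tensors (reassociated). -/
noncomputable def m₃ (Δ : H →ₐ[k] H ⊗[k] H) :
    H ⊗[k] (H ⊗[k] H) →ₐ[k] H ⊗[k] (H ⊗[k] (H ⊗[k] H)) :=
  Algebra.TensorProduct.map (AlgHom.id k H)
    ((Algebra.TensorProduct.assoc k k k H H H).toAlgHom.comp
      (Algebra.TensorProduct.map Δ (AlgHom.id k H)))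

/-- `x ⊗ 1`, reassociated into `H ⊗ (H ⊗ (H ⊗ H))`. -/
noncomputable def timesOne (x : H ⊗[k] (H ⊗[k] H)) :
    H ⊗[k] (H ⊗[k] (H ⊗[k] H)) :=
  (Algebra.TensorProduct.map (AlgHom.id k H)
      (Algebra.TensorProduct.assoc k k k H H H).toAlgHom)
    ((Algebra.TensorProduct.assoc k k k H (H ⊗[k] H) H) (x ⊗ₜ[k] (1 : H)))

/-- `id ⊗ ε ⊗ id` on triple tensors. -/
noncomputable def epsMid (ε : H →ₐ[k] k) :
    H ⊗[k] (H ⊗[k] H) →ₐ[k] H ⊗[k] H :=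
  Algebra.TensorProduct.map (AlgHom.id k H) (epsL k H ε)

/-- A quasi-bialgebra (in the general sense of Drinfeld, with unit constraints
`λ`, `ρ`): `Δ`, `ε` are algebra maps, `φ` is an invertible counital 3-cocycle,
`Δ` is quasi-coassociative and counitary up to `λ` and `ρ`. -/
structure QuasiBialgebra where
  comul : H →ₐ[k] H ⊗[k] H
  counit : H →ₐ[k] k
  phi : H ⊗[k] (H ⊗[k] H)
  phiInv : H ⊗[k] (H ⊗[k] H)
  lam : H
  lamInv : H
  rho : H
  rhoInv : H
  phi_inv : phi * phiInv = 1
  inv_phi : phiInv * phi = 1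
  lam_inv : lam * lamInv = 1
  inv_lam : lamInv * lam = 1
  rho_inv : rho * rhoInv = 1
  inv_rho : rhoInv * rho = 1
  cocycle : m₁ k H comul phi * m₂ k H comul phi =
    ((1 : H) ⊗ₜ[k] phi) * m₃ k H comul phi * timesOne k H phi
  counital : epsMid k H counit phi = rho ⊗ₜ[k] lamInv
  quasi_coassoc : ∀ h : H,
    idΔ k H comul (comul h) = phi * Δid k H comul (comul h) * phiInv
  counit_comul_left : ∀ h : H, epsL k H counit (comul h) = lamInv * h * lam
  counit_comul_right : ∀ h : H, epsR k H counit (comul h) = rhoInv * h * rho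

/-- A left `H`-module over the quasi-bialgebra: a `k`-vector space with an action of
`H` by an algebra map into its `k`-linear endomorphisms. -/
structure QRep where
  V : Type u
  [inst1 : AddCommGroup V]
  [inst2 : Module k V]
  ρ : H →ₐ[k] Module.End k V

attribute [instance] QRep.inst1 QRep.inst2

/-- `H`-linear maps between `H`-modules. -/
def QRepHom (M N : QRep k H) : Type u :=
  {f : M.V →ₗ[k] N.V // ∀ h : H, (N.ρ h) ∘ₗ f = f ∘ₗ (M.ρ h)}

variable {k H} in
/-- The tensor product of two `H`-modules, with the diagonal action through `Δ`. -/
noncomputable def tensorRep (Q : QuasiBialgebra k H) (M N : QRep k H) : QRep k H where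
  V := M.V ⊗[k] N.V
  ρ := ((Module.endTensorEndAlgHom (R := k) (S := k) (A := k)
      (M := M.V) (N := N.V)).comp
    (Algebra.TensorProduct.map M.ρ N.ρ)).comp Q.comul

variable {k H} in
/-- The unit `H`-module `k` with action through `ε`. -/
noncomputable def unitRep (Q : QuasiBialgebra k H) : QRep k H where
  V := k
  ρ := (Algebra.ofId k (Module.End k k)).comp Q.counit

variable {k H} in
/-- The action of `H ⊗ H ⊗ H` on a triple tensor product of modules. -/
noncomputable def end₃ (M N P : QRep k H) :
    H ⊗[k] (H ⊗[k] H) →ₐ[k] Module.End k (M.V ⊗[k] (N.V ⊗[k] P.V)) :=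
  (Module.endTensorEndAlgHom (R := k) (S := k) (A := k)
      (M := M.V) (N := N.V ⊗[k] P.V)).comp
    (Algebra.TensorProduct.map M.ρ
      ((Module.endTensorEndAlgHom (R := k) (S := k) (A := k)
          (M := N.V) (N := P.V)).comp
        (Algebra.TensorProduct.map N.ρ P.ρ)))

variable {k H}

attribute [reducible] tensorRep unitRep

/-- Action of `H ⊗ H` on `M ⊗ N` (not diagonal). -/
noncomputable def act2 (M N : QRep k H) :
    H ⊗[k] H →ₐ[k] Module.End k (M.V ⊗[k] N.V) :=
  (Module.endTensorEndAlgHom (R := k) (S := k) (A := k)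
      (M := M.V) (N := N.V)).comp
    (Algebra.TensorProduct.map M.ρ N.ρ)

lemma act2_tmul (M N : QRep k H) (a b : H) :
    act2 M N (a ⊗ₜ[k] b) = TensorProduct.map (M.ρ a) (N.ρ b) := rfl

lemma end₃_tmul (M N P : QRep k H) (a : H) (y : H ⊗[k] H) :
    end₃ M N P (a ⊗ₜ[k] y) = TensorProduct.map (M.ρ a) (act2 N P y) := rfl

/-- The regular representation. -/
noncomputable abbrev regRep : QRep k H := { V := H, ρ := Algebra.lmul k H }

lemma regRep_apply (a b : H) : (regRep (k := k) (H := H)).ρ a b = a * b := rfl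

lemma act2_reg (x y : H ⊗[k] H) :
    act2 (regRep (k := k) (H := H)) regRep x y = x * y := by
  induction x using TensorProduct.induction_on with
  | zero => simp
  | tmul a b =>
    induction y using TensorProduct.induction_on with
    | zero => simp
    | tmul c d => rw [act2_tmul, TensorProduct.map_tmul, regRep_apply, regRep_apply,
        Algebra.TensorProduct.tmul_mul_tmul]
    | add y₁ y₂ h1 h2 => simp [mul_add, h1, h2]
  | add x₁ x₂ h1 h2 => simp [add_mul, h1, h2]

lemma end₃_reg (x y : H ⊗[k] (H ⊗[k] H)) :
    end₃ (regRep (k := k) (H := H)) regRep regRep x y = x * y := by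
  induction x using TensorProduct.induction_on with
  | zero => simp
  | tmul a b =>
    induction y using TensorProduct.induction_on with
    | zero => simp
    | tmul c d =>
      rw [end₃_tmul, TensorProduct.map_tmul, act2_reg, regRep_apply,
        Algebra.TensorProduct.tmul_mul_tmul]
    | add y₁ y₂ h1 h2 => simp [mul_add, h1, h2]
  | add x₁ x₂ h1 h2 => simp [add_mul, h1, h2]

lemma act2_natural (M N M' N' : QRep k H) (f : QRepHom k H M M')
    (g : QRepHom k H N N') (x : H ⊗[k] H) :
    TensorProduct.map f.1 g.1 ∘ₗ act2 M N x =
      act2 M' N' x ∘ₗ TensorProduct.map f.1 g.1 := by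
  induction x using TensorProduct.induction_on with
  | zero => simp
  | tmul a b =>
    rw [act2_tmul, act2_tmul, ← TensorProduct.map_comp, ← TensorProduct.map_comp,
      f.2 a, g.2 b]
  | add x₁ x₂ h1 h2 =>
    simp only [map_add, LinearMap.comp_add, LinearMap.add_comp, h1, h2]

/-- Compatibility of the associator with the actions. -/
lemma assoc_act (M N P : QRep k H) (y : H ⊗[k] H) (b : H) :
    (TensorProduct.assoc k M.V N.V P.V).toLinearMap ∘ₗ
        TensorProduct.map (act2 M N y) (P.ρ b) =
      (end₃ M N P ((Algebra.TensorProduct.assoc k k k H H H) (y ⊗ₜ[k] b)) :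
          Module.End k (M.V ⊗[k] (N.V ⊗[k] P.V))) ∘ₗ
        (TensorProduct.assoc k M.V N.V P.V).toLinearMap := by
  induction y using TensorProduct.induction_on with
  | zero => simp [TensorProduct.zero_tmul]
  | tmul c d =>
    rw [Algebra.TensorProduct.assoc_tmul, end₃_tmul, act2_tmul, act2_tmul]
    apply TensorProduct.ext_threefold
    intro x y z
    simp
  | add y₁ y₂ h1 h2 =>
    rw [TensorProduct.add_tmul, map_add, map_add, TensorProduct.map_add_left]
    simp only [map_add, LinearMap.add_comp, LinearMap.comp_add, h1, h2]

lemma assoc_act_tensorRep (Q : QuasiBialgebra k H) (M N P : QRep k H)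
    (x : H ⊗[k] H) :
    (TensorProduct.assoc k M.V N.V P.V).toLinearMap ∘ₗ
        act2 (tensorRep Q M N) P x =
      (end₃ M N P (Δid k H Q.comul x) :
          Module.End k (M.V ⊗[k] (N.V ⊗[k] P.V))) ∘ₗ
        (TensorProduct.assoc k M.V N.V P.V).toLinearMap := by
  induction x using TensorProduct.induction_on with
  | zero => simp
  | tmul a b =>
    have h1 : act2 (tensorRep Q M N) P (a ⊗ₜ[k] b) =
        TensorProduct.map (act2 M N (Q.comul a)) (P.ρ b) := rfl
    have h2 : Δid k H Q.comul (a ⊗ₜ[k] b) =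
        (Algebra.TensorProduct.assoc k k k H H H) ((Q.comul a) ⊗ₜ[k] b) := rfl
    rw [h1, h2, assoc_act]
  | add x₁ x₂ h1 h2 =>
    simp only [map_add, LinearMap.comp_add, LinearMap.add_comp, h1, h2]

lemma act2_tensorRep_right (Q : QuasiBialgebra k H) (M N P : QRep k H)
    (x : H ⊗[k] H) :
    (act2 M (tensorRep Q N P) x :
        Module.End k (M.V ⊗[k] (N.V ⊗[k] P.V))) =
      end₃ M N P (idΔ k H Q.comul x) := by
  induction x using TensorProduct.induction_on with
  | zero => simp
  | tmul a b => rfl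
  | add x₁ x₂ h1 h2 => simp only [map_add, h1, h2]

lemma map_act2_right (M N P : QRep k H) (y : H ⊗[k] H) :
    TensorProduct.map (LinearMap.id : M.V →ₗ[k] M.V) (act2 N P y) =
      (end₃ M N P ((1 : H) ⊗ₜ[k] y) :
        Module.End k (M.V ⊗[k] (N.V ⊗[k] P.V))) := by
  rw [end₃_tmul, map_one]
  rfl

lemma lid_map {V W : Type u} [AddCommGroup V] [Module k V] [AddCommGroup W]
    [Module k W] (g : V →ₗ[k] W) :
    (TensorProduct.lid k W).toLinearMap ∘ₗ
        TensorProduct.map (LinearMap.id : k →ₗ[k] k) g =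
      g ∘ₗ (TensorProduct.lid k V).toLinearMap := by
  apply TensorProduct.ext'
  intro c v
  simp

lemma rid_map {V W : Type u} [AddCommGroup V] [Module k V] [AddCommGroup W]
    [Module k W] (g : V →ₗ[k] W) :
    (TensorProduct.rid k W).toLinearMap ∘ₗ
        TensorProduct.map g (LinearMap.id : k →ₗ[k] k) =
      g ∘ₗ (TensorProduct.rid k V).toLinearMap := by
  apply TensorProduct.ext'
  intro v c
  simp

lemma unitRep_rho (Q : QuasiBialgebra k H) (a : H) :
    (unitRep Q).ρ a = Q.counit a • (LinearMap.id : Module.End k k) := by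
  have h : (unitRep Q).ρ a = algebraMap k (Module.End k k) (Q.counit a) := rfl
  rw [h, Module.algebraMap_end_eq_smul_id]

lemma lid_act2 (Q : QuasiBialgebra k H) (M : QRep k H) (x : H ⊗[k] H) :
    (TensorProduct.lid k M.V).toLinearMap ∘ₗ act2 (unitRep Q) M x =
      (M.ρ (epsL k H Q.counit x) : Module.End k M.V) ∘ₗ
        (TensorProduct.lid k M.V).toLinearMap := by
  induction x using TensorProduct.induction_on with
  | zero => simp
  | tmul a b =>
    have h : epsL k H Q.counit (a ⊗ₜ[k] b) = Q.counit a • b := by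
      simp [epsL, Algebra.smul_def]
    rw [act2_tmul, h, unitRep_rho, TensorProduct.map_smul_left, map_smul,
      LinearMap.comp_smul, LinearMap.smul_comp, lid_map]
  | add x₁ x₂ h1 h2 =>
    simp only [map_add, LinearMap.comp_add, LinearMap.add_comp, h1, h2]

lemma rid_act2 (Q : QuasiBialgebra k H) (M : QRep k H) (x : H ⊗[k] H) :
    (TensorProduct.rid k M.V).toLinearMap ∘ₗ act2 M (unitRep Q) x =
      (M.ρ (epsR k H Q.counit x) : Module.End k M.V) ∘ₗ
        (TensorProduct.rid k M.V).toLinearMap := by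
  induction x using TensorProduct.induction_on with
  | zero => simp
  | tmul a b =>
    have h : epsR k H Q.counit (a ⊗ₜ[k] b) = Q.counit b • a := by
      simp [epsR, Algebra.smul_def]
    rw [act2_tmul, h, unitRep_rho, TensorProduct.map_smul_right, map_smul,
      LinearMap.comp_smul, LinearMap.smul_comp, rid_map]
  | add x₁ x₂ h1 h2 =>
    simp only [map_add, LinearMap.comp_add, LinearMap.add_comp, h1, h2]

lemma hex_ops (Q : QuasiBialgebra k H) (M N P : QRep k H) (x : H ⊗[k] H) :
    (end₃ M N P Q.phi : Module.End k (M.V ⊗[k] (N.V ⊗[k] P.V))) ∘ₗ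
        (TensorProduct.assoc k M.V N.V P.V).toLinearMap ∘ₗ
        (act2 (tensorRep Q M N) P x :
          Module.End k ((M.V ⊗[k] N.V) ⊗[k] P.V)) ∘ₗ
        TensorProduct.map (act2 M N x : Module.End k (M.V ⊗[k] N.V))
          LinearMap.id =
      (end₃ M N P (Q.phi * Δid k H Q.comul x *
          (Algebra.TensorProduct.assoc k k k H H H) (x ⊗ₜ[k] (1 : H))) :
        Module.End k (M.V ⊗[k] (N.V ⊗[k] P.V))) ∘ₗ
      (TensorProduct.assoc k M.V N.V P.V).toLinearMap := by
  have B : (TensorProduct.assoc k M.V N.V P.V).toLinearMap ∘ₗ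
      TensorProduct.map (act2 M N x : Module.End k (M.V ⊗[k] N.V))
        LinearMap.id =
      (end₃ M N P ((Algebra.TensorProduct.assoc k k k H H H) (x ⊗ₜ[k] (1 : H))) :
        Module.End k (M.V ⊗[k] (N.V ⊗[k] P.V))) ∘ₗ
      (TensorProduct.assoc k M.V N.V P.V).toLinearMap := by
    have h := assoc_act M N P x 1
    rwa [map_one, Module.End.one_eq_id] at h
  calc (end₃ M N P Q.phi : Module.End k (M.V ⊗[k] (N.V ⊗[k] P.V))) ∘ₗ
        ((TensorProduct.assoc k M.V N.V P.V).toLinearMap ∘ₗ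
        ((act2 (tensorRep Q M N) P x :
          Module.End k ((M.V ⊗[k] N.V) ⊗[k] P.V)) ∘ₗ
        TensorProduct.map (act2 M N x : Module.End k (M.V ⊗[k] N.V))
          LinearMap.id))
      = (end₃ M N P Q.phi : Module.End k _) ∘ₗ
        (((TensorProduct.assoc k M.V N.V P.V).toLinearMap ∘ₗ
          (act2 (tensorRep Q M N) P x : Module.End k _)) ∘ₗ
          TensorProduct.map (act2 M N x : Module.End k _) LinearMap.id) := by
        rw [LinearMap.comp_assoc]
    _ = (end₃ M N P Q.phi : Module.End k _) ∘ₗ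
        (((end₃ M N P (Δid k H Q.comul x) : Module.End k _) ∘ₗ
          (TensorProduct.assoc k M.V N.V P.V).toLinearMap) ∘ₗ
          TensorProduct.map (act2 M N x : Module.End k _) LinearMap.id) := by
        rw [assoc_act_tensorRep]
    _ = (end₃ M N P Q.phi : Module.End k _) ∘ₗ
        ((end₃ M N P (Δid k H Q.comul x) : Module.End k _) ∘ₗ
          ((TensorProduct.assoc k M.V N.V P.V).toLinearMap ∘ₗ
          TensorProduct.map (act2 M N x : Module.End k _) LinearMap.id)) := by
        rw [LinearMap.comp_assoc]
    _ = (end₃ M N P Q.phi : Module.End k _) ∘ₗ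
        ((end₃ M N P (Δid k H Q.comul x) : Module.End k _) ∘ₗ
          ((end₃ M N P ((Algebra.TensorProduct.assoc k k k H H H)
              (x ⊗ₜ[k] (1 : H))) : Module.End k _) ∘ₗ
          (TensorProduct.assoc k M.V N.V P.V).toLinearMap)) := by rw [B]
    _ = (end₃ M N P (Q.phi * Δid k H Q.comul x *
          (Algebra.TensorProduct.assoc k k k H H H) (x ⊗ₜ[k] (1 : H))) :
          Module.End k _) ∘ₗ
        (TensorProduct.assoc k M.V N.V P.V).toLinearMap := by
        rw [map_mul, map_mul, Module.End.mul_eq_comp, Module.End.mul_eq_comp,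
          LinearMap.comp_assoc, LinearMap.comp_assoc]

lemma hex_rhs (Q : QuasiBialgebra k H) (M N P : QRep k H) (x : H ⊗[k] H) :
    (act2 M (tensorRep Q N P) x :
        Module.End k (M.V ⊗[k] (N.V ⊗[k] P.V))) ∘ₗ
      TensorProduct.map LinearMap.id
        (act2 N P x : Module.End k (N.V ⊗[k] P.V)) ∘ₗ
      (TensorProduct.assoc k M.V N.V P.V).toLinearMap =
    (end₃ M N P (idΔ k H Q.comul x * ((1 : H) ⊗ₜ[k] x)) :
        Module.End k (M.V ⊗[k] (N.V ⊗[k] P.V))) ∘ₗ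
      (TensorProduct.assoc k M.V N.V P.V).toLinearMap := by
  rw [act2_tensorRep_right, map_act2_right, map_mul, Module.End.mul_eq_comp,
    LinearMap.comp_assoc]

/-- The `H`-module map `regRep → M` given by acting on an element. -/
noncomputable def elemHom (M : QRep k H) (m : M.V) : QRepHom k H regRep M :=
  ⟨LinearMap.flip M.ρ.toLinearMap m, by
    intro h
    exact LinearMap.ext fun (h' : H) => by
      show (M.ρ h) ((M.ρ h') m) = (M.ρ (h * h')) m
      rw [map_mul]
      rfl⟩

lemma map_elemHom (M N : QRep k H) (m : M.V) (n : N.V) (x : H ⊗[k] H) :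
    TensorProduct.map (elemHom M m).1 (elemHom N n).1 x =
      act2 M N x (m ⊗ₜ[k] n) := by
  induction x using TensorProduct.induction_on with
  | zero => simp
  | tmul a b => rfl
  | add x₁ x₂ h1 h2 => simp [map_add, LinearMap.add_apply, h1, h2]

lemma cancel_left {G : Type*} [Monoid G] {a b x y : G} (hab : b * a = 1)
    (h : a * x = y) : x = b * y := by
  rw [← h, ← mul_assoc, hab, one_mul]

lemma left_inv_unique {G : Type*} [Monoid G] {a b c : G} (h1 : a * b = 1)
    (h2 : b * c = 1) : a = c := by
  calc a = a * (b * c) := by rw [h2, mul_one]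
    _ = a * b * c := (mul_assoc a b c).symm
    _ = c := by rw [h1, one_mul]

lemma one_tmul_mul (x y : H ⊗[k] H) :
    ((1 : H) ⊗ₜ[k] x) * ((1 : H) ⊗ₜ[k] y) = (1 : H) ⊗ₜ[k] (x * y) := by
  rw [Algebra.TensorProduct.tmul_mul_tmul, one_mul]

lemma tmul_one_mul (x y : H ⊗[k] H) :
    (Algebra.TensorProduct.assoc k k k H H H) (x ⊗ₜ[k] (1 : H)) *
      (Algebra.TensorProduct.assoc k k k H H H) (y ⊗ₜ[k] (1 : H)) =
    (Algebra.TensorProduct.assoc k k k H H H) ((x * y) ⊗ₜ[k] (1 : H)) := by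
  rw [← map_mul, Algebra.TensorProduct.tmul_mul_tmul, one_mul]

lemma end_eq_id {V W : Type u} [AddCommGroup V] [Module k V] [AddCommGroup W]
    [Module k W] (e : W ≃ₗ[k] V) (f : Module.End k V)
    (h : f ∘ₗ (e : W →ₗ[k] V) = (e : W →ₗ[k] V)) : f = LinearMap.id := by
  apply LinearMap.ext
  intro v
  have h2 := LinearMap.congr_fun h (e.symm v)
  simpa using h2

set_option maxHeartbeats 2000000 in
/-- Let `H` be a quasi-bialgebra over a field `k` and
`F : H-Mod ⥤ Vect_k` the forgetful functor from the monoidal category of left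
`H`-modules (associativity constraint given by `φ`, unit constraints by `λ`, `ρ`).
The following are equivalent:
(1) there is a natural family `ψ₂` making `(F, id_k, ψ₂)` a monoidal functor;
(2) there is an invertible `α ∈ H ⊗ H` such that the twist `H_α` is an ordinary
bialgebra (`φ_α`, `λ_α`, `ρ_α` trivial);
(3) there is an invertible `α ∈ H ⊗ H` with
`φ = (H⊗Δ)(α⁻¹)·(1⊗α⁻¹)·(α⊗1)·(Δ⊗H)(α)`, `(ε⊗H)(α) = λ` and `(H⊗ε)(α) = ρ`. -/
theorem forget_monoidal_iff_twist_trivial (Q : QuasiBialgebra k H) :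
    (((∃ ψ : ∀ M N : QRep k H, (M.V ⊗[k] N.V) ≃ₗ[k] (M.V ⊗[k] N.V),
        (∀ (M N M' N' : QRep k H) (f : QRepHom k H M M') (g : QRepHom k H N N'),
          (ψ M' N').toLinearMap ∘ₗ TensorProduct.map f.1 g.1 =
            TensorProduct.map f.1 g.1 ∘ₗ (ψ M N).toLinearMap) ∧
        (∀ M N P : QRep k H,
          (end₃ M N P Q.phi : Module.End k (M.V ⊗[k] (N.V ⊗[k] P.V))) ∘ₗ
              (TensorProduct.assoc k M.V N.V P.V).toLinearMap ∘ₗ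
              (ψ (tensorRep Q M N) P).toLinearMap ∘ₗ
              TensorProduct.map (ψ M N).toLinearMap LinearMap.id =
            (ψ M (tensorRep Q N P)).toLinearMap ∘ₗ
              TensorProduct.map LinearMap.id (ψ N P).toLinearMap ∘ₗ
              (TensorProduct.assoc k M.V N.V P.V).toLinearMap) ∧
        (∀ M : QRep k H,
          (M.ρ Q.lam : Module.End k M.V) ∘ₗ
              (TensorProduct.lid k M.V).toLinearMap ∘ₗ
              (ψ (unitRep Q) M).toLinearMap =
            (TensorProduct.lid k M.V).toLinearMap) ∧
        (∀ M : QRep k H,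
          (M.ρ Q.rho : Module.End k M.V) ∘ₗ
              (TensorProduct.rid k M.V).toLinearMap ∘ₗ
              (ψ M (unitRep Q)).toLinearMap =
            (TensorProduct.rid k M.V).toLinearMap)) ↔
      (∃ α αInv : H ⊗[k] H, α * αInv = 1 ∧ αInv * α = 1 ∧
        ((1 : H) ⊗ₜ[k] α) * idΔ k H Q.comul α * Q.phi *
            Δid k H Q.comul αInv *
            (Algebra.TensorProduct.assoc k k k H H H) (αInv ⊗ₜ[k] (1 : H)) = 1 ∧
        Q.lam * epsL k H Q.counit αInv = 1 ∧
        Q.rho * epsR k H Q.counit αInv = 1)) ∧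
    ((∃ α αInv : H ⊗[k] H, α * αInv = 1 ∧ αInv * α = 1 ∧
        ((1 : H) ⊗ₜ[k] α) * idΔ k H Q.comul α * Q.phi *
            Δid k H Q.comul αInv *
            (Algebra.TensorProduct.assoc k k k H H H) (αInv ⊗ₜ[k] (1 : H)) = 1 ∧
        Q.lam * epsL k H Q.counit αInv = 1 ∧
        Q.rho * epsR k H Q.counit αInv = 1) ↔
      (∃ α αInv : H ⊗[k] H, α * αInv = 1 ∧ αInv * α = 1 ∧
        Q.phi = idΔ k H Q.comul αInv * ((1 : H) ⊗ₜ[k] αInv) *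
            (Algebra.TensorProduct.assoc k k k H H H) (α ⊗ₜ[k] (1 : H)) *
            Δid k H Q.comul α ∧
        epsL k H Q.counit α = Q.lam ∧
        epsR k H Q.counit α = Q.rho))) := by
  have hone2 : ((1 : H) ⊗ₜ[k] (1 : H)) = (1 : H ⊗[k] H) :=
    Algebra.TensorProduct.one_def.symm
  have honeT : ((1 : H) ⊗ₜ[k] (1 : H ⊗[k] H)) = (1 : H ⊗[k] (H ⊗[k] H)) :=
    Algebra.TensorProduct.one_def.symm
  have honeH : ((1 : H ⊗[k] H) ⊗ₜ[k] (1 : H)) = (1 : (H ⊗[k] H) ⊗[k] H) :=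
    Algebra.TensorProduct.one_def.symm
  have key_iff : ∀ α αInv : H ⊗[k] H, α * αInv = 1 → αInv * α = 1 →
      ((((1 : H) ⊗ₜ[k] α) * idΔ k H Q.comul α * Q.phi * Δid k H Q.comul αInv *
          (Algebra.TensorProduct.assoc k k k H H H) (αInv ⊗ₜ[k] (1 : H)) = 1) ↔
        (Q.phi * (Δid k H Q.comul αInv *
            (Algebra.TensorProduct.assoc k k k H H H) (αInv ⊗ₜ[k] (1 : H))) =
          idΔ k H Q.comul αInv * ((1 : H) ⊗ₜ[k] αInv))) := by
    intro α αInv hαI hIα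
    have hab : ((1 : H) ⊗ₜ[k] αInv) * ((1 : H) ⊗ₜ[k] α) = 1 := by
      rw [one_tmul_mul, hIα, honeT]
    have hba : ((1 : H) ⊗ₜ[k] α) * ((1 : H) ⊗ₜ[k] αInv) = 1 := by
      rw [one_tmul_mul, hαI, honeT]
    have hi : idΔ k H Q.comul αInv * idΔ k H Q.comul α = 1 := by
      rw [← map_mul, hIα, map_one]
    have hi' : idΔ k H Q.comul α * idΔ k H Q.comul αInv = 1 := by
      rw [← map_mul, hαI, map_one]
    constructor
    · intro h
      simp only [mul_assoc] at h
      have h1 := cancel_left hab h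
      rw [mul_one] at h1
      exact cancel_left hi h1
    · intro h
      simp only [mul_assoc]
      rw [h, ← mul_assoc (idΔ k H Q.comul α), hi', one_mul, hba]
  constructor
  · constructor
    · rintro ⟨ψ, hnat, hhex, hlam, hrho⟩
      set β : H ⊗[k] H := (ψ regRep regRep) ((1 : H) ⊗ₜ[k] (1 : H)) with hβdef
      set α : H ⊗[k] H := (ψ regRep regRep).symm ((1 : H) ⊗ₜ[k] (1 : H))
        with hαdef
      have hψ : ∀ (M N : QRep k H) (m : M.V) (n : N.V),
          (ψ M N) (m ⊗ₜ[k] n) = act2 M N β (m ⊗ₜ[k] n) := by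
        intro M N m n
        have h := congrArg (fun F => F ((1 : H) ⊗ₜ[k] (1 : H)))
          (hnat regRep regRep M N (elemHom M m) (elemHom N n))
        simp only [LinearMap.comp_apply, LinearEquiv.coe_coe] at h
        rw [map_elemHom, map_elemHom, hone2, map_one, Module.End.one_apply] at h
        exact h
      have hψ' : ∀ M N : QRep k H, (ψ M N).toLinearMap =
          (act2 M N β : Module.End k (M.V ⊗[k] N.V)) := by
        intro M N
        apply TensorProduct.ext'
        intro m n
        exact hψ M N m n
      have hself : ∀ x : H ⊗[k] H, (ψ regRep regRep) x = β * x := by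
        intro x
        induction x using TensorProduct.induction_on with
        | zero => simp
        | tmul a b => rw [hψ regRep regRep a b, act2_reg]
        | add x y hx hy => rw [map_add, hx, hy, mul_add]
      have hβα : β * α = 1 := by
        have h := (ψ regRep regRep).apply_symm_apply ((1 : H) ⊗ₜ[k] (1 : H))
        rw [hself, hone2] at h
        exact h
      have hαβ : α * β = 1 := by
        apply (ψ regRep regRep).injective
        rw [hself, hself, ← mul_assoc, hβα, one_mul, mul_one]
      refine ⟨α, β, hαβ, hβα, ?_, ?_, ?_⟩
      · rw [key_iff α β hαβ hβα]
        have hx := hhex regRep regRep regRep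
        simp only [hψ'] at hx
        rw [hex_ops, hex_rhs] at hx
        have he := congrArg
          (fun F => F (((1 : H) ⊗ₜ[k] (1 : H)) ⊗ₜ[k] (1 : H))) hx
        simp only [LinearMap.comp_apply, LinearEquiv.coe_coe,
          TensorProduct.assoc_tmul] at he
        have h111 : ((1 : H) ⊗ₜ[k] ((1 : H) ⊗ₜ[k] (1 : H))) =
            (1 : H ⊗[k] (H ⊗[k] H)) := by rw [hone2, honeT]
        rw [h111, end₃_reg, end₃_reg, mul_one, mul_one] at he
        rw [← mul_assoc]
        exact he
      · have hl := hlam regRep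
        rw [hψ', lid_act2, ← LinearMap.comp_assoc, ← Module.End.mul_eq_comp,
          ← map_mul] at hl
        have h2 := end_eq_id (TensorProduct.lid k (regRep (k := k) (H := H)).V)
          _ hl
        have h3 := LinearMap.congr_fun h2 (1 : H)
        have h4 : Q.lam * epsL k H Q.counit β * (1 : H) = 1 := h3
        rw [mul_one] at h4
        exact h4
      · have hl := hrho regRep
        rw [hψ', rid_act2, ← LinearMap.comp_assoc, ← Module.End.mul_eq_comp,
          ← map_mul] at hl
        have h2 := end_eq_id (TensorProduct.rid k (regRep (k := k) (H := H)).V)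
          _ hl
        have h3 := LinearMap.congr_fun h2 (1 : H)
        have h4 : Q.rho * epsR k H Q.counit β * (1 : H) = 1 := h3
        rw [mul_one] at h4
        exact h4
    · rintro ⟨α, αInv, hαI, hIα, hphi, hlam, hrho⟩
      have hkey := (key_iff α αInv hαI hIα).mp hphi
      have hinv1 : ∀ M N : QRep k H,
          (act2 M N αInv : Module.End k (M.V ⊗[k] N.V)) ∘ₗ
            (act2 M N α : Module.End k (M.V ⊗[k] N.V)) = LinearMap.id := by
        intro M N
        rw [← Module.End.mul_eq_comp, ← map_mul, hIα, map_one,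
          Module.End.one_eq_id]
      have hinv2 : ∀ M N : QRep k H,
          (act2 M N α : Module.End k (M.V ⊗[k] N.V)) ∘ₗ
            (act2 M N αInv : Module.End k (M.V ⊗[k] N.V)) = LinearMap.id := by
        intro M N
        rw [← Module.End.mul_eq_comp, ← map_mul, hαI, map_one,
          Module.End.one_eq_id]
      refine ⟨fun M N => LinearEquiv.ofLinear (act2 M N αInv) (act2 M N α)
        (hinv1 M N) (hinv2 M N), ?_, ?_, ?_, ?_⟩
      · intro M N M' N' f g
        exact (act2_natural M N M' N' f g αInv).symm
      · intro M N P
        have hx : (end₃ M N P Q.phi :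
              Module.End k (M.V ⊗[k] (N.V ⊗[k] P.V))) ∘ₗ
            (TensorProduct.assoc k M.V N.V P.V).toLinearMap ∘ₗ
            (act2 (tensorRep Q M N) P αInv :
              Module.End k ((M.V ⊗[k] N.V) ⊗[k] P.V)) ∘ₗ
            TensorProduct.map
              (act2 M N αInv : Module.End k (M.V ⊗[k] N.V)) LinearMap.id =
            (act2 M (tensorRep Q N P) αInv :
              Module.End k (M.V ⊗[k] (N.V ⊗[k] P.V))) ∘ₗ
            TensorProduct.map LinearMap.id
              (act2 N P αInv : Module.End k (N.V ⊗[k] P.V)) ∘ₗ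
            (TensorProduct.assoc k M.V N.V P.V).toLinearMap := by
          rw [hex_ops, hex_rhs, mul_assoc, hkey]
        exact hx
      · intro M
        have hx : (M.ρ Q.lam : Module.End k M.V) ∘ₗ
            (TensorProduct.lid k M.V).toLinearMap ∘ₗ
            (act2 (unitRep Q) M αInv :
              Module.End k ((unitRep Q).V ⊗[k] M.V)) =
            (TensorProduct.lid k M.V).toLinearMap := by
          rw [lid_act2, ← LinearMap.comp_assoc, ← Module.End.mul_eq_comp,
            ← map_mul, hlam, map_one, Module.End.one_eq_id, LinearMap.id_comp]
        exact hx
      · intro M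
        have hx : (M.ρ Q.rho : Module.End k M.V) ∘ₗ
            (TensorProduct.rid k M.V).toLinearMap ∘ₗ
            (act2 M (unitRep Q) αInv :
              Module.End k (M.V ⊗[k] (unitRep Q).V)) =
            (TensorProduct.rid k M.V).toLinearMap := by
          rw [rid_act2, ← LinearMap.comp_assoc, ← Module.End.mul_eq_comp,
            ← map_mul, hrho, map_one, Module.End.one_eq_id, LinearMap.id_comp]
        exact hx
  · constructor
    · rintro ⟨α, αInv, hαI, hIα, hphi, hlam, hrho⟩
      have hkey := (key_iff α αInv hαI hIα).mp hphi
      refine ⟨α, αInv, hαI, hIα, ?_, ?_, ?_⟩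
      · have d1 : (Algebra.TensorProduct.assoc k k k H H H) (αInv ⊗ₜ[k] (1 : H)) *
            (Algebra.TensorProduct.assoc k k k H H H) (α ⊗ₜ[k] (1 : H)) = 1 := by
          rw [tmul_one_mul, hIα, honeH, map_one]
        have c1 : Δid k H Q.comul αInv * Δid k H Q.comul α = 1 := by
          rw [← map_mul, hIα, map_one]
        have hD : (Δid k H Q.comul αInv *
              (Algebra.TensorProduct.assoc k k k H H H) (αInv ⊗ₜ[k] (1 : H))) *
            ((Algebra.TensorProduct.assoc k k k H H H) (α ⊗ₜ[k] (1 : H)) *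
              Δid k H Q.comul α) = 1 := by
          rw [mul_assoc, ← mul_assoc ((Algebra.TensorProduct.assoc k k k H H H)
            (αInv ⊗ₜ[k] (1 : H))), d1, one_mul, c1]
        calc Q.phi = Q.phi * ((Δid k H Q.comul αInv *
              (Algebra.TensorProduct.assoc k k k H H H) (αInv ⊗ₜ[k] (1 : H))) *
            ((Algebra.TensorProduct.assoc k k k H H H) (α ⊗ₜ[k] (1 : H)) *
              Δid k H Q.comul α)) := by rw [hD, mul_one]
          _ = (Q.phi * (Δid k H Q.comul αInv *
              (Algebra.TensorProduct.assoc k k k H H H) (αInv ⊗ₜ[k] (1 : H)))) *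
            ((Algebra.TensorProduct.assoc k k k H H H) (α ⊗ₜ[k] (1 : H)) *
              Δid k H Q.comul α) := by rw [← mul_assoc]
          _ = (idΔ k H Q.comul αInv * ((1 : H) ⊗ₜ[k] αInv)) *
            ((Algebra.TensorProduct.assoc k k k H H H) (α ⊗ₜ[k] (1 : H)) *
              Δid k H Q.comul α) := by rw [hkey]
          _ = idΔ k H Q.comul αInv * ((1 : H) ⊗ₜ[k] αInv) *
            (Algebra.TensorProduct.assoc k k k H H H) (α ⊗ₜ[k] (1 : H)) *
              Δid k H Q.comul α := by rw [← mul_assoc]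
      · have e1 : epsL k H Q.counit αInv * epsL k H Q.counit α = 1 := by
          rw [← map_mul, hIα, map_one]
        exact (left_inv_unique hlam e1).symm
      · have e1 : epsR k H Q.counit αInv * epsR k H Q.counit α = 1 := by
          rw [← map_mul, hIα, map_one]
        exact (left_inv_unique hrho e1).symm
    · rintro ⟨α, αInv, hαI, hIα, hphi, hlam, hrho⟩
      refine ⟨α, αInv, hαI, hIα, ?_, ?_, ?_⟩
      · rw [key_iff α αInv hαI hIα, hphi]
        have c2 : Δid k H Q.comul α * Δid k H Q.comul αInv = 1 := by
          rw [← map_mul, hαI, map_one]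
        have d2 : (Algebra.TensorProduct.assoc k k k H H H) (α ⊗ₜ[k] (1 : H)) *
            (Algebra.TensorProduct.assoc k k k H H H) (αInv ⊗ₜ[k] (1 : H)) = 1 := by
          rw [tmul_one_mul, hαI, honeH, map_one]
        simp only [mul_assoc]
        rw [← mul_assoc (Δid k H Q.comul α), c2, one_mul, d2, mul_one]
      · rw [← hlam, ← map_mul, hαI, map_one]
      · rw [← hrho, ← map_mul, hαI, map_one]

end QB
end
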